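/- Let α^{(1)}, α^{(2)}, α^{(3)}, α^{(4)} be admissible tuples, each of which is either good or bad with one and the same bad index, and suppose a 4-linear form Λ is of restricted weak type α^{(s)} for each s. Let α := θ₁α^{(1)}+⋯+θ₄α^{(4)} with θ_s ∈ (0,1), θ₁+⋯+θ₄ = 1, and assume α is admissible. Assume some α^{(j)} is a majorant of α with index j₀, where: (1) if α is good then j₀ is an index with α_{j₀} > 0, and (2) if α is bad then j₀ is its bad index (and it is the common bad index of the bad tuples among the α^{(s)}). Then Λ is of restricted weak type α. -/

import Mathlib

open MeasureTheory
open scoped ENNReal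

noncomputable section

/-- `X E` is the set of measurable functions supported on `E` with `‖f‖_∞ ≤ 1`. -/
def MemX (E : Set ℝ) (f : ℝ → ℂ) : Prop :=
  Measurable f ∧ (∀ x ∉ E, f x = 0) ∧ ∀ x, ‖f x‖ ≤ 1

/-- A tuple is admissible if each entry is < 1, the entries sum to 1, and at most one entry
is negative. -/
def Admissible (a : Fin 4 → ℝ) : Prop :=
  (∀ i, a i < 1) ∧ (∑ i, a i = 1) ∧ ∀ i j, a i < 0 → a j < 0 → i = j

/-- A good tuple is an admissible tuple with no negative entry. -/
def GoodTuple (a : Fin 4 → ℝ) : Prop := Admissible a ∧ ∀ i, 0 ≤ a i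

/-- Λ is 4-linear: in each slot it is linear. -/
def Multilinear4 (Λ : (Fin 4 → ℝ → ℂ) → ℂ) : Prop :=
  ∀ (i : Fin 4) (f : Fin 4 → ℝ → ℂ) (g : ℝ → ℂ) (c : ℂ),
    Λ (Function.update f i (c • f i + g)) = c * Λ f + Λ (Function.update f i g)

/-- Λ is of restricted weak type `a` with constant `C`: for all sets `E i` of finite positive
measure there are major subsets `E' i ⊆ E i` (with `E' i = E i` at every good index) such that
`|Λ(f)| ≤ C ∏ |E' i|^{a i}` whenever each `f i ∈ X(E' i)`. -/
def RWT (Λ : (Fin 4 → ℝ → ℂ) → ℂ) (a : Fin 4 → ℝ) (C : ℝ) : Prop :=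
  ∀ E : Fin 4 → Set ℝ, (∀ i, MeasurableSet (E i)) → (∀ i, 0 < volume (E i)) →
    (∀ i, volume (E i) < ⊤) →
    ∃ E' : Fin 4 → Set ℝ,
      (∀ i, MeasurableSet (E' i) ∧ E' i ⊆ E i ∧ volume (E i) ≤ 2 * volume (E' i)) ∧
      (∀ i, 0 ≤ a i → E' i = E i) ∧
      ∀ f : Fin 4 → ℝ → ℂ, (∀ i, MemX (E' i) (f i)) →
        ‖Λ f‖ ≤ C * ∏ i, (volume (E' i)).toReal ^ a i


section St7Aux
variable {Λ : (Fin 4 → ℝ → ℂ) → ℂ}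

lemma st7_add (hΛ : Multilinear4 Λ) (f : Fin 4 → ℝ → ℂ) (i : Fin 4) (g h : ℝ → ℂ) :
    Λ (Function.update f i (g + h)) = Λ (Function.update f i g) + Λ (Function.update f i h) := by
  have key := hΛ i (Function.update f i g) h 1
  simp only [one_smul, Function.update_self, Function.update_idem, one_mul] at key
  exact key

lemma st7_zero (hΛ : Multilinear4 Λ) (f : Fin 4 → ℝ → ℂ) (i : Fin 4) :
    Λ (Function.update f i 0) = 0 := by
  have h := st7_add hΛ f i 0 0
  rw [add_zero] at h
  exact (left_eq_add.mp h)

lemma st7_sum (hΛ : Multilinear4 Λ) (f : Fin 4 → ℝ → ℂ) (i : Fin 4) (g : ℕ → ℝ → ℂ) (N : ℕ) :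
    Λ (Function.update f i (∑ n ∈ Finset.range N, g n)) =
      ∑ n ∈ Finset.range N, Λ (Function.update f i (g n)) := by
  induction N with
  | zero => simpa using st7_zero hΛ f i
  | succ N ih => rw [Finset.sum_range_succ, Finset.sum_range_succ, st7_add hΛ, ih]

lemma st7_rpow_sum {ι : Type*} (x : ℝ) (hx : 0 < x) (t : Finset ι) (f : ι → ℝ) :
    x ^ (∑ s ∈ t, f s) = ∏ s ∈ t, x ^ f s := by
  classical
  induction t using Finset.induction_on with
  | empty => simp
  | insert x t h ih => rw [Finset.sum_insert h, Finset.prod_insert h, Real.rpow_add hx, ih]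

lemma st7_pow_rpow (b : ℝ) (hb : 0 ≤ b) (n : ℕ) (e : ℝ) : (b ^ n) ^ e = (b ^ e) ^ n := by
  rw [← Real.rpow_natCast b n, ← Real.rpow_natCast (b ^ e) n, ← Real.rpow_mul hb,
    ← Real.rpow_mul hb, mul_comm]

lemma st7_geo_mean (a : Fin 4 → Fin 4 → ℝ) (θ α : Fin 4 → ℝ) (v : Fin 4 → ℝ)
    (hθ : ∀ s, 0 < θ s) (hθ1 : ∑ s, θ s = 1) (hα : ∀ i, α i = ∑ s, θ s * a s i)
    (hv : ∀ i, 0 < v i) :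
    ∃ s, ∏ i, v i ^ a s i ≤ ∏ i, v i ^ α i := by
  by_contra hcon
  push_neg at hcon
  set W := ∏ i, v i ^ α i with hW
  have hWpos : 0 < W := Finset.prod_pos fun i _ => Real.rpow_pos_of_pos (hv i) _
  have key : W = ∏ s, (∏ i, v i ^ a s i) ^ θ s := by
    calc W = ∏ i, v i ^ (∑ s, θ s * a s i) := Finset.prod_congr rfl fun i _ => by rw [hα i]
    _ = ∏ i, ∏ s, v i ^ (θ s * a s i) :=
        Finset.prod_congr rfl fun i _ => st7_rpow_sum _ (hv i) _ _
    _ = ∏ s, ∏ i, v i ^ (θ s * a s i) := Finset.prod_comm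
    _ = ∏ s, ∏ i, (v i ^ a s i) ^ θ s := by
        refine Finset.prod_congr rfl fun s _ => Finset.prod_congr rfl fun i _ => ?_
        rw [mul_comm, Real.rpow_mul (hv i).le]
    _ = ∏ s, (∏ i, v i ^ a s i) ^ θ s := Finset.prod_congr rfl fun s _ =>
        Real.finset_prod_rpow _ _ (fun i _ => (Real.rpow_pos_of_pos (hv i) _).le) _
  have h1 : W = ∏ s : Fin 4, W ^ θ s := by
    rw [← st7_rpow_sum W hWpos Finset.univ θ, hθ1, Real.rpow_one]
  have hlt : W < ∏ s, (∏ i, v i ^ a s i) ^ θ s := by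
    nth_rewrite 1 [h1]
    exact Finset.prod_lt_prod_of_nonempty (fun s _ => Real.rpow_pos_of_pos hWpos _)
      (fun s _ => Real.rpow_lt_rpow hWpos.le (hcon s) (hθ s)) Finset.univ_nonempty
  exact absurd key (ne_of_lt hlt)

lemma st7_double {x y e : ℝ} (hy : 0 < y) (hyx : y ≤ x) (hx2 : x ≤ 2 * y) (he : -2 ≤ e) :
    y ^ e ≤ 4 * x ^ e := by
  have hx : 0 < x := lt_of_lt_of_le hy hyx
  have hxe : 0 < x ^ e := Real.rpow_pos_of_pos hx e
  rcases le_or_gt 0 e with h0 | h0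
  · have h1 : y ^ e ≤ x ^ e := Real.rpow_le_rpow hy.le hyx h0
    nlinarith
  · have hxy2 : x / 2 ≤ y := by linarith
    have hx2pos : (0:ℝ) < x / 2 := by positivity
    have h1 : y ^ e ≤ (x / 2) ^ e := Real.rpow_le_rpow_of_nonpos hx2pos hxy2 h0.le
    have h2 : (x / 2) ^ e = x ^ e * 2 ^ (-e) := by
      rw [Real.div_rpow hx.le (by norm_num : (0:ℝ) ≤ 2), Real.rpow_neg (by norm_num : (0:ℝ) ≤ 2)]
      ring
    have h3 : (2:ℝ) ^ (-e) ≤ 4 := by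
      have h4 : (2:ℝ) ^ (-e) ≤ 2 ^ (2:ℝ) :=
        Real.rpow_le_rpow_of_exponent_le one_le_two (by linarith)
      have h5 : (2:ℝ) ^ (2:ℝ) = 4 := by
        rw [show (2:ℝ) = ((2:ℕ):ℝ) from by norm_num, Real.rpow_natCast]
        norm_num
      linarith
    calc y ^ e ≤ x ^ e * 2 ^ (-e) := h2 ▸ h1
    _ ≤ 4 * x ^ e := by nlinarith [Real.rpow_pos_of_pos (by norm_num : (0:ℝ) < 2) (-e)]

lemma st7_geom_sum_le {r : ℝ} (h0 : 0 ≤ r) (h1 : r < 1) (n : ℕ) :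
    ∑ i ∈ Finset.range n, r ^ i ≤ (1 - r)⁻¹ := by
  rw [geom_sum_eq (ne_of_lt h1)]
  rw [div_le_iff_of_neg (by linarith : r - 1 < 0)]
  have hrn : 0 ≤ r ^ n := pow_nonneg h0 n
  have hne : (1:ℝ) - r ≠ 0 := by linarith
  have h2 : (1 - r)⁻¹ * (r - 1) = -1 := by
    field_simp
    ring
  rw [h2]; linarith

lemma st7_prod_update (v : Fin 4 → ℝ) (e : Fin 4 → ℝ) (j : Fin 4) (t : ℝ) :
    ∏ i, (Function.update v j t i) ^ e i = t ^ e j * ∏ i ∈ Finset.univ.erase j, v i ^ e i := by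
  rw [← Finset.mul_prod_erase Finset.univ (fun i => (Function.update v j t i) ^ e i)
    (Finset.mem_univ j), Function.update_self]
  congr 1
  exact Finset.prod_congr rfl fun i hi => by rw [Function.update_of_ne (Finset.ne_of_mem_erase hi)]
lemma st7_rwt_mono {Λ : (Fin 4 → ℝ → ℂ) → ℂ} {a : Fin 4 → ℝ} {C C' : ℝ}
    (h : RWT Λ a C) (hle : C ≤ C') : RWT Λ a C' := by
  intro E hm hp hf
  obtain ⟨E', h1, h2, h3⟩ := h E hm hp hf
  refine ⟨E', h1, h2, fun f hf' => (h3 f hf').trans ?_⟩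
  exact mul_le_mul_of_nonneg_right hle
    (Finset.prod_nonneg fun i _ => Real.rpow_nonneg ENNReal.toReal_nonneg _)

lemma st7_major_pos {E M : Set ℝ} (hpos : 0 < volume E) (hfin : volume E < ⊤)
    (hsub : M ⊆ E) (hmaj : volume E ≤ 2 * volume M) :
    0 < (volume M).toReal ∧ (volume M).toReal ≤ (volume E).toReal ∧
      (volume E).toReal ≤ 2 * (volume M).toReal := by
  have hMfin : volume M < ⊤ := lt_of_le_of_lt (measure_mono hsub) hfin
  have hMpos : 0 < volume M := by
    by_contra h
    push_neg at h
    have h0 : volume M = 0 := le_antisymm h zero_le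
    rw [h0, mul_zero] at hmaj
    exact absurd (le_antisymm hmaj zero_le) hpos.ne'
  refine ⟨ENNReal.toReal_pos hMpos.ne' hMfin.ne, ENNReal.toReal_mono hfin.ne (measure_mono hsub), ?_⟩
  have h2 := ENNReal.toReal_mono (by simp [hMfin.ne, ENNReal.mul_ne_top] : 2 * volume M ≠ ⊤) hmaj
  rw [ENNReal.toReal_mul] at h2
  simpa using h2

lemma st7_case_bad (Λ : (Fin 4 → ℝ → ℂ) → ℂ) (a : Fin 4 → Fin 4 → ℝ) (j₀ : Fin 4)
    (θ α : Fin 4 → ℝ) (C₀ : ℝ) (hC₀ : 0 ≤ C₀) (hrwt : ∀ s, RWT Λ (a s) C₀)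
    (hθ : ∀ s, 0 < θ s) (hθ1 : ∑ s, θ s = 1)
    (hα : ∀ i, α i = ∑ s, θ s * a s i)
    (hlb : ∀ s i, -2 ≤ a s i)
    (hcommon : ∀ s i, a s i < 0 → i = j₀)
    (hαneg : α j₀ < 0) : ∃ C : ℝ, RWT Λ α C := by
  refine ⟨4 * C₀, ?_⟩
  intro E hmeas hpos hfin
  set K : Fin 4 → ℝ := fun i => (volume (E i)).toReal with hK
  have hKpos : ∀ i, 0 < K i := fun i => ENNReal.toReal_pos (hpos i).ne' (hfin i).ne
  obtain ⟨s, hs⟩ := st7_geo_mean a θ α K hθ hθ1 hα hKpos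
  obtain ⟨E', h1, h2, h3⟩ := hrwt s E hmeas hpos hfin
  have hEq : ∀ i, i ≠ j₀ → E' i = E i := by
    intro i hi
    refine h2 i ?_
    by_contra hneg
    push_neg at hneg
    exact hi (hcommon s i hneg)
  refine ⟨E', h1, ?_, ?_⟩
  · intro i hi
    rcases eq_or_ne i j₀ with rfl | hne
    · exact absurd hαneg (not_lt.mpr hi)
    · exact hEq i hne
  · intro f hf
    have key := h3 f hf
    obtain ⟨hmpos, hmle, hmmaj⟩ := st7_major_pos (hpos j₀) (hfin j₀) (h1 j₀).2.1 (h1 j₀).2.2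
    set m : ℝ := (volume (E' j₀)).toReal with hm
    have hsplit : ∀ e : Fin 4 → ℝ,
        (∏ i, (volume (E' i)).toReal ^ e i) = m ^ e j₀ * ∏ i ∈ Finset.univ.erase j₀, K i ^ e i := by
      intro e
      rw [← Finset.mul_prod_erase Finset.univ (fun i => (volume (E' i)).toReal ^ e i)
        (Finset.mem_univ j₀)]
      congr 1
      exact Finset.prod_congr rfl fun i hi => by rw [hEq i (Finset.ne_of_mem_erase hi)]
    have hsplitK : ∀ e : Fin 4 → ℝ,
        (∏ i, K i ^ e i) = K j₀ ^ e j₀ * ∏ i ∈ Finset.univ.erase j₀, K i ^ e i := fun e =>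
      (Finset.mul_prod_erase Finset.univ (fun i => K i ^ e i) (Finset.mem_univ j₀)).symm
    have hRpos : ∀ e : Fin 4 → ℝ, (0:ℝ) ≤ ∏ i ∈ Finset.univ.erase j₀, K i ^ e i := fun e =>
      Finset.prod_nonneg fun i _ => Real.rpow_nonneg (hKpos i).le _
    calc ‖Λ f‖ ≤ C₀ * ∏ i, (volume (E' i)).toReal ^ a s i := key
    _ = C₀ * (m ^ a s j₀ * ∏ i ∈ Finset.univ.erase j₀, K i ^ a s i) := by rw [hsplit]
    _ ≤ C₀ * ((4 * K j₀ ^ a s j₀) * ∏ i ∈ Finset.univ.erase j₀, K i ^ a s i) := by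
        exact mul_le_mul_of_nonneg_left
          (mul_le_mul_of_nonneg_right (st7_double hmpos hmle hmmaj (hlb s j₀)) (hRpos (a s))) hC₀
    _ = 4 * C₀ * ∏ i, K i ^ a s i := by rw [hsplitK]; ring
    _ ≤ 4 * C₀ * ∏ i, K i ^ α i := mul_le_mul_of_nonneg_left hs (by positivity)
    _ = 4 * C₀ * (K j₀ ^ α j₀ * ∏ i ∈ Finset.univ.erase j₀, K i ^ α i) := by rw [hsplitK]
    _ ≤ 4 * C₀ * (m ^ α j₀ * ∏ i ∈ Finset.univ.erase j₀, K i ^ α i) := by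
        have h5 : K j₀ ^ α j₀ ≤ m ^ α j₀ :=
          Real.rpow_le_rpow_of_nonpos hmpos hmle hαneg.le
        exact mul_le_mul_of_nonneg_left (mul_le_mul_of_nonneg_right h5 (hRpos α)) (by positivity)
    _ = 4 * C₀ * ∏ i, (volume (E' i)).toReal ^ α i := by rw [hsplit]

lemma st7_case_good (Λ : (Fin 4 → ℝ → ℂ) → ℂ) (hΛ : Multilinear4 Λ)
    (a : Fin 4 → Fin 4 → ℝ) (j₀ : Fin 4) (θ α : Fin 4 → ℝ) (C₀ : ℝ) (hC₀ : 0 ≤ C₀)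
    (hrwt : ∀ s, RWT Λ (a s) C₀)
    (hθ : ∀ s, 0 < θ s) (hθ1 : ∑ s, θ s = 1)
    (hα : ∀ i, α i = ∑ s, θ s * a s i)
    (hlb : ∀ s i, -2 ≤ a s i)
    (hcommon : ∀ s i, a s i < 0 → i = j₀)
    (hαpos : 0 < α j₀) : ∃ C : ℝ, RWT Λ α C := by
  classical
  -- a good tuple with positive exponent at j₀
  have hs1 : ∃ s, 0 < a s j₀ := by
    by_contra h
    push_neg at h
    have hle : α j₀ ≤ 0 := by
      rw [hα j₀]
      exact Finset.sum_nonpos fun s _ => mul_nonpos_of_nonneg_of_nonpos (hθ s).le (h s)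
    linarith
  obtain ⟨s₁, hβ⟩ := hs1
  have hs1nn : ∀ i, 0 ≤ a s₁ i := by
    intro i
    by_contra hn
    push_neg at hn
    have hij := hcommon s₁ i hn
    subst hij
    linarith
  set β := a s₁ j₀ with hβdef
  set r₀ : ℝ := (2⁻¹ : ℝ) ^ (α j₀) with hr₀
  set r : ℝ := (2⁻¹ : ℝ) ^ β with hr
  have h2i : (0:ℝ) < 2⁻¹ := by norm_num
  have hr₀pos : 0 < r₀ := Real.rpow_pos_of_pos h2i _
  have hr₀lt : r₀ < 1 := Real.rpow_lt_one h2i.le (by norm_num) hαpos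
  have hrpos : 0 < r := Real.rpow_pos_of_pos h2i _
  have hrlt : r < 1 := Real.rpow_lt_one h2i.le (by norm_num) hβ
  refine ⟨4 * C₀ * (1 - r₀)⁻¹ + 1, ?_⟩
  intro E hmeas hpos hfin
  set K : Fin 4 → ℝ := fun i => (volume (E i)).toReal with hK
  have hKpos : ∀ i, 0 < K i := fun i => ENNReal.toReal_pos (hpos i).ne' (hfin i).ne
  set R : ℝ := ∏ i ∈ Finset.univ.erase j₀, K i ^ α i with hR
  have hRpos : 0 < R := Finset.prod_pos fun i _ => Real.rpow_pos_of_pos (hKpos i) _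
  set B : ℝ := ∏ i, K i ^ α i with hB
  have hBsplit : B = K j₀ ^ α j₀ * R :=
    (Finset.mul_prod_erase Finset.univ (fun i => K i ^ α i) (Finset.mem_univ j₀)).symm
  have hBpos : 0 < B := Finset.prod_pos fun i _ => Real.rpow_pos_of_pos (hKpos i) _
  set P₁ : ℝ := ∏ i ∈ Finset.univ.erase j₀, K i ^ a s₁ i with hP₁
  have hP₁pos : 0 < P₁ := Finset.prod_pos fun i _ => Real.rpow_pos_of_pos (hKpos i) _
  set A : ℝ := C₀ * ((2 * K j₀) ^ β * P₁) with hA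
  have hAnn : 0 ≤ A := by
    apply mul_nonneg hC₀
    positivity
  -- the one-step major-subset selection
  have step : ∀ F : Set ℝ, ∃ Mset : Set ℝ, MeasurableSet Mset ∧ Mset ⊆ F ∧
      (¬(MeasurableSet F ∧ 0 < volume F ∧ volume F < ⊤) → Mset = ∅) ∧
      ((MeasurableSet F ∧ 0 < volume F ∧ volume F < ⊤) →
        volume F ≤ 2 * volume Mset ∧
        ∀ g : Fin 4 → ℝ → ℂ, (∀ i, i ≠ j₀ → MemX (E i) (g i)) → MemX Mset (g j₀) →
          ‖Λ g‖ ≤ 4 * C₀ * ((volume F).toReal ^ α j₀ * R)) := by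
    intro F
    by_cases hF : MeasurableSet F ∧ 0 < volume F ∧ volume F < ⊤
    · obtain ⟨hFm, hF0, hFt⟩ := hF
      set L : ℝ := (volume F).toReal with hLdef
      have hLpos : 0 < L := ENNReal.toReal_pos hF0.ne' hFt.ne
      set v : Fin 4 → ℝ := Function.update K j₀ L with hv
      have hvpos : ∀ i, 0 < v i := by
        intro i
        rcases eq_or_ne i j₀ with rfl | hi
        · rw [hv, Function.update_self]; exact hLpos
        · rw [hv, Function.update_of_ne hi]; exact hKpos i
      obtain ⟨s, hsle⟩ := st7_geo_mean a θ α v hθ hθ1 hα hvpos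
      set EE : Fin 4 → Set ℝ := Function.update E j₀ F with hEE
      have hEEj : EE j₀ = F := Function.update_self _ _ _
      have hEEi : ∀ i, i ≠ j₀ → EE i = E i := fun i hi => Function.update_of_ne hi _ _
      have hEEm : ∀ i, MeasurableSet (EE i) := by
        intro i
        rcases eq_or_ne i j₀ with rfl | hi
        · rwa [hEEj]
        · rw [hEEi i hi]; exact hmeas i
      have hEEpos : ∀ i, 0 < volume (EE i) := by
        intro i
        rcases eq_or_ne i j₀ with rfl | hi
        · rwa [hEEj]
        · rw [hEEi i hi]; exact hpos i
      have hEEfin : ∀ i, volume (EE i) < ⊤ := by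
        intro i
        rcases eq_or_ne i j₀ with rfl | hi
        · rwa [hEEj]
        · rw [hEEi i hi]; exact hfin i
      obtain ⟨E', h1, h2, h3⟩ := hrwt s EE hEEm hEEpos hEEfin
      have hE'i : ∀ i, i ≠ j₀ → E' i = E i := by
        intro i hi
        have hnn : 0 ≤ a s i := by
          by_contra hneg
          push_neg at hneg
          exact hi (hcommon s i hneg)
        rw [h2 i hnn, hEEi i hi]
      have hsubF : E' j₀ ⊆ F := by rw [← hEEj]; exact (h1 j₀).2.1
      have hmajF : volume F ≤ 2 * volume (E' j₀) := by rw [← hEEj]; exact (h1 j₀).2.2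
      refine ⟨E' j₀, (h1 j₀).1, hsubF, fun hn => absurd ⟨hFm, hF0, hFt⟩ hn, fun _ => ⟨hmajF, ?_⟩⟩
      intro g hg hgj
      have hg' : ∀ i, MemX (E' i) (g i) := by
        intro i
        rcases eq_or_ne i j₀ with rfl | hi
        · exact hgj
        · rw [hE'i i hi]; exact hg i hi
      have key := h3 g hg'
      obtain ⟨hmpos, hmle, hmmaj⟩ := st7_major_pos hF0 hFt hsubF hmajF
      set m : ℝ := (volume (E' j₀)).toReal with hm
      have hsplit : ∀ e : Fin 4 → ℝ,
          (∏ i, (volume (E' i)).toReal ^ e i) = m ^ e j₀ * ∏ i ∈ Finset.univ.erase j₀, K i ^ e i := by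
        intro e
        rw [← Finset.mul_prod_erase Finset.univ (fun i => (volume (E' i)).toReal ^ e i)
          (Finset.mem_univ j₀)]
        congr 1
        refine Finset.prod_congr rfl fun i hi => ?_
        rw [hE'i i (Finset.ne_of_mem_erase hi)]
      have hvsplit : ∀ e : Fin 4 → ℝ,
          (∏ i, v i ^ e i) = L ^ e j₀ * ∏ i ∈ Finset.univ.erase j₀, K i ^ e i := fun e =>
        st7_prod_update K e j₀ L
      have hRApos : ∀ e : Fin 4 → ℝ, (0:ℝ) ≤ ∏ i ∈ Finset.univ.erase j₀, K i ^ e i := fun e =>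
        Finset.prod_nonneg fun i _ => Real.rpow_nonneg (hKpos i).le _
      calc ‖Λ g‖ ≤ C₀ * ∏ i, (volume (E' i)).toReal ^ a s i := key
      _ = C₀ * (m ^ a s j₀ * ∏ i ∈ Finset.univ.erase j₀, K i ^ a s i) := by rw [hsplit]
      _ ≤ C₀ * ((4 * L ^ a s j₀) * ∏ i ∈ Finset.univ.erase j₀, K i ^ a s i) :=
          mul_le_mul_of_nonneg_left
            (mul_le_mul_of_nonneg_right (st7_double hmpos hmle hmmaj (hlb s j₀)) (hRApos _)) hC₀
      _ = 4 * C₀ * ∏ i, v i ^ a s i := by rw [hvsplit]; ring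
      _ ≤ 4 * C₀ * ∏ i, v i ^ α i := mul_le_mul_of_nonneg_left hsle (by positivity)
      _ = 4 * C₀ * (L ^ α j₀ * R) := by rw [hvsplit, hR]
    · exact ⟨∅, MeasurableSet.empty, Set.empty_subset F, fun _ => rfl, fun h => absurd h hF⟩
  choose M hM1 hM2 hM3 hM4 using step
  set Fs : ℕ → Set ℝ :=
    fun n => Nat.rec (motive := fun _ => Set ℝ) (E j₀) (fun _ Fn => Fn \ M Fn) n with hFsdef
  have hFs0 : Fs 0 = E j₀ := rfl
  have hFsS : ∀ n, Fs (n + 1) = Fs n \ M (Fs n) := fun n => rfl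
  have inv : ∀ n, MeasurableSet (Fs n) ∧ Fs n ⊆ E j₀ ∧
      (2:ℝ≥0∞) ^ n * volume (Fs n) ≤ volume (E j₀) := by
    intro n
    induction n with
    | zero => exact ⟨hmeas j₀, subset_rfl, by simp [hFs0]⟩
    | succ n ih =>
      obtain ⟨hm, hsub, hvol⟩ := ih
      have hMm := hM1 (Fs n)
      have hMsub := hM2 (Fs n)
      refine ⟨by rw [hFsS n]; exact hm.diff hMm,
        by rw [hFsS n]; exact Set.diff_subset.trans hsub, ?_⟩
      have key2 : 2 * volume (Fs (n + 1)) ≤ volume (Fs n) := by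
        by_cases h0 : 0 < volume (Fs n)
        · have hg : MeasurableSet (Fs n) ∧ 0 < volume (Fs n) ∧ volume (Fs n) < ⊤ :=
            ⟨hm, h0, lt_of_le_of_lt (measure_mono hsub) (hfin j₀)⟩
          have hmaj := (hM4 (Fs n) hg).1
          have hMfin : volume (M (Fs n)) ≠ ⊤ :=
            (lt_of_le_of_lt (measure_mono hMsub) hg.2.2).ne
          have hd : volume (Fs (n + 1)) = volume (Fs n) - volume (M (Fs n)) := by
            rw [hFsS n]
            exact measure_diff hMsub hMm.nullMeasurableSet hMfin
          have hBA : volume (M (Fs n)) ≤ volume (Fs n) := measure_mono hMsub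
          have h1 : volume (Fs n) - volume (M (Fs n)) ≤ volume (M (Fs n)) := by
            rw [tsub_le_iff_right, ← two_mul]
            exact hmaj
          rw [hd, two_mul]
          calc (volume (Fs n) - volume (M (Fs n))) + (volume (Fs n) - volume (M (Fs n)))
              ≤ volume (M (Fs n)) + (volume (Fs n) - volume (M (Fs n))) := add_le_add_left h1 _
            _ = volume (Fs n) := add_tsub_cancel_of_le hBA
        · push_neg at h0
          have h00 : volume (Fs n) = 0 := le_antisymm h0 zero_le
          have h01 : volume (Fs (n + 1)) = 0 := by
            refine le_antisymm ?_ zero_le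
            rw [← h00]
            exact measure_mono (by rw [hFsS n]; exact Set.diff_subset)
          simp [h01]
      calc (2:ℝ≥0∞) ^ (n + 1) * volume (Fs (n + 1))
          = 2 ^ n * (2 * volume (Fs (n + 1))) := by rw [pow_succ]; ring
        _ ≤ 2 ^ n * volume (Fs n) := mul_le_mul_right key2 _
        _ ≤ volume (E j₀) := hvol
  have hLn : ∀ n, (volume (Fs n)).toReal ≤ (2⁻¹:ℝ) ^ n * K j₀ := by
    intro n
    have h := ENNReal.toReal_mono (hfin j₀).ne (inv n).2.2
    rw [ENNReal.toReal_mul, ENNReal.toReal_pow, ENNReal.toReal_ofNat] at h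
    have h2n : (0:ℝ) < 2 ^ n := by positivity
    rw [inv_pow, inv_mul_eq_div, le_div_iff₀ h2n]
    linarith
  refine ⟨E, fun i => ⟨hmeas i, subset_rfl, ?_⟩, fun i _ => rfl, ?_⟩
  · rw [two_mul]; exact le_self_add
  intro f hf
  -- piece bounds
  have piece : ∀ n, ‖Λ (Function.update f j₀ ((M (Fs n)).indicator (f j₀)))‖ ≤
      4 * C₀ * r₀ ^ n * B := by
    intro n
    by_cases h0 : 0 < volume (Fs n)
    · have hg : MeasurableSet (Fs n) ∧ 0 < volume (Fs n) ∧ volume (Fs n) < ⊤ :=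
        ⟨(inv n).1, h0, lt_of_le_of_lt (measure_mono (inv n).2.1) (hfin j₀)⟩
      have hb := (hM4 (Fs n) hg).2 (Function.update f j₀ ((M (Fs n)).indicator (f j₀)))
        (fun i hi => by rw [Function.update_of_ne hi]; exact hf i) ?memx
      case memx =>
        rw [Function.update_self]
        refine ⟨(hf j₀).1.indicator (hM1 _), fun x hx => Set.indicator_of_notMem hx _, fun x => ?_⟩
        by_cases hx : x ∈ M (Fs n)
        · rw [Set.indicator_of_mem hx]; exact (hf j₀).2.2 x
        · rw [Set.indicator_of_notMem hx]; simp
      have h5 : (volume (Fs n)).toReal ^ α j₀ ≤ r₀ ^ n * K j₀ ^ α j₀ := by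
        calc (volume (Fs n)).toReal ^ α j₀ ≤ ((2⁻¹:ℝ) ^ n * K j₀) ^ α j₀ :=
            Real.rpow_le_rpow ENNReal.toReal_nonneg (hLn n) hαpos.le
          _ = ((2⁻¹:ℝ) ^ n) ^ α j₀ * K j₀ ^ α j₀ :=
            Real.mul_rpow (by positivity) (hKpos j₀).le
          _ = r₀ ^ n * K j₀ ^ α j₀ := by
            rw [st7_pow_rpow (2⁻¹:ℝ) (by norm_num) n (α j₀)]
      calc ‖Λ (Function.update f j₀ ((M (Fs n)).indicator (f j₀)))‖
          ≤ 4 * C₀ * ((volume (Fs n)).toReal ^ α j₀ * R) := hb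
        _ ≤ 4 * C₀ * ((r₀ ^ n * K j₀ ^ α j₀) * R) :=
            mul_le_mul_of_nonneg_left (mul_le_mul_of_nonneg_right h5 hRpos.le) (by positivity)
        _ = 4 * C₀ * r₀ ^ n * B := by rw [hBsplit]; ring
    · push_neg at h0
      have h00 : ¬(MeasurableSet (Fs n) ∧ 0 < volume (Fs n) ∧ volume (Fs n) < ⊤) := by
        rintro ⟨_, h0', _⟩
        exact absurd h0' (not_lt.mpr h0)
      rw [hM3 (Fs n) h00]
      have hz : Λ (Function.update f j₀ ((∅ : Set ℝ).indicator (f j₀))) = 0 := by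
        rw [show (∅ : Set ℝ).indicator (f j₀) = 0 from Set.indicator_empty _]
        exact st7_zero hΛ f j₀
      rw [hz, norm_zero]
      exact mul_nonneg (mul_nonneg (mul_nonneg (by norm_num) hC₀)
        (pow_nonneg hr₀pos.le n)) hBpos.le
  -- remainder bound
  have rem : ∀ N : ℕ, ‖Λ (Function.update f j₀ ((Fs N).indicator (f j₀)))‖ ≤
      A * r ^ N := by
    intro N
    set εN : ℝ := K j₀ * (2⁻¹:ℝ) ^ N with hεN
    have hεpos : 0 < εN := mul_pos (hKpos j₀) (by positivity)
    set G : Set ℝ := Fs N ∪ Set.Ioo (0:ℝ) εN with hG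
    have hGm : MeasurableSet G := ((inv N).1).union measurableSet_Ioo
    have hIoo : volume (Set.Ioo (0:ℝ) εN) = ENNReal.ofReal εN := by
      rw [Real.volume_Ioo, sub_zero]
    have hGpos : 0 < volume G := by
      refine lt_of_lt_of_le ?_ (measure_mono Set.subset_union_right)
      rw [hIoo]
      exact ENNReal.ofReal_pos.mpr hεpos
    have hFNfin : volume (Fs N) < ⊤ := lt_of_le_of_lt (measure_mono (inv N).2.1) (hfin j₀)
    have hGle : volume G ≤ volume (Fs N) + ENNReal.ofReal εN := by
      rw [← hIoo]
      exact measure_union_le _ _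
    have hGfin : volume G < ⊤ :=
      lt_of_le_of_lt hGle (ENNReal.add_lt_top.mpr ⟨hFNfin, ENNReal.ofReal_lt_top⟩)
    have hgle : (volume G).toReal ≤ 2 * εN := by
      have h2 := ENNReal.toReal_mono
        (ENNReal.add_lt_top.mpr ⟨hFNfin, ENNReal.ofReal_lt_top⟩).ne hGle
      rw [ENNReal.toReal_add hFNfin.ne ENNReal.ofReal_ne_top,
        ENNReal.toReal_ofReal hεpos.le] at h2
      have h3 := hLn N
      have h4 : (2⁻¹:ℝ) ^ N * K j₀ = εN := by rw [hεN]; ring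
      linarith
    set EE : Fin 4 → Set ℝ := Function.update E j₀ G with hEE
    have hEEj : EE j₀ = G := Function.update_self _ _ _
    have hEEi : ∀ i, i ≠ j₀ → EE i = E i := fun i hi => Function.update_of_ne hi _ _
    have hEEm : ∀ i, MeasurableSet (EE i) := by
      intro i
      rcases eq_or_ne i j₀ with rfl | hi
      · rwa [hEEj]
      · rw [hEEi i hi]; exact hmeas i
    have hEEpos : ∀ i, 0 < volume (EE i) := by
      intro i
      rcases eq_or_ne i j₀ with rfl | hi
      · rwa [hEEj]
      · rw [hEEi i hi]; exact hpos i
    have hEEfin : ∀ i, volume (EE i) < ⊤ := by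
      intro i
      rcases eq_or_ne i j₀ with rfl | hi
      · rwa [hEEj]
      · rw [hEEi i hi]; exact hfin i
    obtain ⟨E', h1, h2, h3⟩ := hrwt s₁ EE hEEm hEEpos hEEfin
    have hE'all : ∀ i, E' i = EE i := fun i => h2 i (hs1nn i)
    have key := h3 (Function.update f j₀ ((Fs N).indicator (f j₀))) ?memx2
    case memx2 =>
      intro i
      rcases eq_or_ne i j₀ with rfl | hi
      · rw [Function.update_self, hE'all i, hEEj]
        refine ⟨(hf i).1.indicator (inv N).1, ?_, fun x => ?_⟩
        · intro x hx
          exact Set.indicator_of_notMem (fun hm => hx (Set.mem_union_left _ hm)) _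
        · by_cases hx : x ∈ Fs N
          · rw [Set.indicator_of_mem hx]; exact (hf i).2.2 x
          · rw [Set.indicator_of_notMem hx]; simp
      · rw [Function.update_of_ne hi, hE'all i, hEEi i hi]
        exact hf i
    set gv : ℝ := (volume G).toReal with hgv
    have hsplit : ∏ i, (volume (E' i)).toReal ^ a s₁ i = gv ^ β * P₁ := by
      rw [← Finset.mul_prod_erase Finset.univ (fun i => (volume (E' i)).toReal ^ a s₁ i)
        (Finset.mem_univ j₀), hP₁]
      congr 1
      · rw [hE'all j₀, hEEj]
      · refine Finset.prod_congr rfl fun i hi => ?_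
        rw [hE'all i, hEEi i (Finset.ne_of_mem_erase hi)]
    have hgvb : gv ^ β ≤ (2 * K j₀) ^ β * r ^ N := by
      have h6 : (2:ℝ) * εN = (2 * K j₀) * ((2⁻¹:ℝ) ^ N) := by rw [hεN]; ring
      calc gv ^ β ≤ (2 * εN) ^ β :=
          Real.rpow_le_rpow ENNReal.toReal_nonneg hgle hβ.le
        _ = (2 * K j₀) ^ β * r ^ N := by
          rw [h6, Real.mul_rpow (by positivity) (by positivity),
            st7_pow_rpow (2⁻¹:ℝ) (by norm_num) N β]
    calc ‖Λ (Function.update f j₀ ((Fs N).indicator (f j₀)))‖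
        ≤ C₀ * ∏ i, (volume (E' i)).toReal ^ a s₁ i := key
      _ = C₀ * (gv ^ β * P₁) := by rw [hsplit]
      _ ≤ C₀ * (((2 * K j₀) ^ β * r ^ N) * P₁) :=
          mul_le_mul_of_nonneg_left (mul_le_mul_of_nonneg_right hgvb hP₁pos.le) hC₀
      _ = A * r ^ N := by rw [hA]; ring
  -- choose N
  obtain ⟨N, hN0⟩ := exists_pow_lt_of_lt_one (show (0:ℝ) < B / (A + 1) by positivity) hrlt
  have hN : A * r ^ N ≤ B := by
    have h1 : A * r ^ N ≤ (A + 1) * r ^ N :=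
      mul_le_mul_of_nonneg_right (by linarith) (pow_nonneg hrpos.le N)
    have h2 : (A + 1) * r ^ N ≤ (A + 1) * (B / (A + 1)) :=
      mul_le_mul_of_nonneg_left hN0.le (by linarith)
    have h3 : (A + 1) * (B / (A + 1)) = B := by
      field_simp
    linarith
  -- decomposition
  have hsupp : ∀ x ∉ E j₀, f j₀ x = 0 := (hf j₀).2.1
  have hdecomp : ∀ Nn : ℕ, f j₀ =
      (∑ n ∈ Finset.range Nn, (M (Fs n)).indicator (f j₀)) + (Fs Nn).indicator (f j₀) := by
    intro Nn
    induction Nn with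
    | zero =>
      rw [Finset.range_zero, Finset.sum_empty, zero_add, hFs0]
      exact (Set.indicator_eq_self.mpr (Function.support_subset_iff'.mpr hsupp)).symm
    | succ n ih =>
      rw [Finset.sum_range_succ]
      have hsplit2 : (Fs n).indicator (f j₀) =
          (M (Fs n)).indicator (f j₀) + (Fs (n + 1)).indicator (f j₀) := by
        funext x
        simp only [Pi.add_apply, hFsS n]
        by_cases hx : x ∈ M (Fs n)
        · rw [Set.indicator_of_mem hx, Set.indicator_of_mem (hM2 (Fs n) hx),
            Set.indicator_of_notMem (fun hc => hc.2 hx), add_zero]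
        · rw [Set.indicator_of_notMem hx, zero_add]
          by_cases hx2 : x ∈ Fs n
          · rw [Set.indicator_of_mem hx2, Set.indicator_of_mem (Set.mem_diff_of_mem hx2 hx)]
          · rw [Set.indicator_of_notMem hx2, Set.indicator_of_notMem (fun hc => hx2 hc.1)]
      calc f j₀ = (∑ n' ∈ Finset.range n, (M (Fs n')).indicator (f j₀)) +
            (Fs n).indicator (f j₀) := ih
        _ = (∑ n' ∈ Finset.range n, (M (Fs n')).indicator (f j₀)) +
            ((M (Fs n)).indicator (f j₀) + (Fs (n + 1)).indicator (f j₀)) := by rw [hsplit2]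
        _ = _ := (add_assoc _ _ _).symm
  have habs : ‖Λ f‖ ≤
      (∑ n ∈ Finset.range N, ‖Λ (Function.update f j₀ ((M (Fs n)).indicator (f j₀)))‖) +
        ‖Λ (Function.update f j₀ ((Fs N).indicator (f j₀)))‖ := by
    conv_lhs => rw [← Function.update_eq_self j₀ f, hdecomp N]
    rw [st7_add hΛ, st7_sum hΛ]
    exact le_trans (norm_add_le _ _) (add_le_add_left (norm_sum_le _ _) _)
  have hgeo : (∑ n ∈ Finset.range N, 4 * C₀ * r₀ ^ n * B) ≤ 4 * C₀ * (1 - r₀)⁻¹ * B := by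
    calc (∑ n ∈ Finset.range N, 4 * C₀ * r₀ ^ n * B)
        = (∑ n ∈ Finset.range N, r₀ ^ n) * (4 * C₀ * B) := by
          rw [Finset.sum_mul]
          exact Finset.sum_congr rfl fun n _ => by ring
      _ ≤ (1 - r₀)⁻¹ * (4 * C₀ * B) :=
          mul_le_mul_of_nonneg_right (st7_geom_sum_le hr₀pos.le hr₀lt N) (by positivity)
      _ = 4 * C₀ * (1 - r₀)⁻¹ * B := by ring
  calc ‖Λ f‖
      ≤ (∑ n ∈ Finset.range N, ‖Λ (Function.update f j₀ ((M (Fs n)).indicator (f j₀)))‖) +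
        ‖Λ (Function.update f j₀ ((Fs N).indicator (f j₀)))‖ := habs
    _ ≤ (∑ n ∈ Finset.range N, 4 * C₀ * r₀ ^ n * B) + A * r ^ N :=
        add_le_add (Finset.sum_le_sum fun n _ => piece n) (rem N)
    _ ≤ 4 * C₀ * (1 - r₀)⁻¹ * B + B := add_le_add hgeo hN
    _ = (4 * C₀ * (1 - r₀)⁻¹ + 1) * B := by ring

end St7Aux

/-- Interpolation towards a possibly bad tuple: suppose Λ is of restricted weak type at four
admissible tuples, each good or bad with the same bad index j₀, let α be an admissible strictly
convex combination of them, and suppose some `a s` is a majorant of α with index j₀, where j₀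
has `α j₀ > 0` if α is good, and j₀ is the bad index of α otherwise.  Then Λ is of restricted
weak type α. -/
theorem statement7 (Λ : (Fin 4 → ℝ → ℂ) → ℂ) (hΛ : Multilinear4 Λ)
    (a : Fin 4 → Fin 4 → ℝ) (j₀ : Fin 4) (θ : Fin 4 → ℝ) (α : Fin 4 → ℝ)
    (hadm : ∀ s, Admissible (a s))
    (hcommon : ∀ s i, a s i < 0 → i = j₀)
    (hrwt : ∀ s, ∃ C : ℝ, RWT Λ (a s) C)
    (hθ : ∀ s, 0 < θ s ∧ θ s < 1) (hθ1 : ∑ s, θ s = 1)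
    (hα : α = fun i => ∑ s, θ s * a s i)
    (hαadm : Admissible α)
    (hmaj : ∃ s, ∀ j, j ≠ j₀ → α j < a s j)
    (hgoodcase : (∀ i, 0 ≤ α i) → 0 < α j₀)
    (hbadcase : ∀ i, α i < 0 → i = j₀) :
    ∃ C : ℝ, RWT Λ α C := by
  classical
  choose Cs hCs using hrwt
  set C₀ : ℝ := ∑ s, |Cs s| with hC₀def
  have hC₀nn : 0 ≤ C₀ := Finset.sum_nonneg fun s _ => abs_nonneg _
  have hle : ∀ s, Cs s ≤ C₀ := by
    intro s
    calc Cs s ≤ |Cs s| := le_abs_self _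
      _ ≤ ∑ s, |Cs s| := Finset.single_le_sum (f := fun s => |Cs s|) (fun s _ => abs_nonneg _) (Finset.mem_univ s)
  have hrwt' : ∀ s, RWT Λ (a s) C₀ := fun s => st7_rwt_mono (hCs s) (hle s)
  have hαpt : ∀ i, α i = ∑ s, θ s * a s i := fun i => by rw [hα]
  have hlb : ∀ s i, -2 ≤ a s i := by
    intro s i
    have h1 := (hadm s).1
    have hsum := (hadm s).2.1
    have hsplit : a s i + ∑ j ∈ Finset.univ.erase i, a s j = 1 := by
      rw [Finset.add_sum_erase _ _ (Finset.mem_univ i)]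
      exact hsum
    have hle3 : ∑ j ∈ Finset.univ.erase i, a s j ≤ 3 := by
      have h2 := Finset.sum_le_sum (fun j (_ : j ∈ Finset.univ.erase i) => (h1 j).le)
      rw [Finset.sum_const] at h2
      have hcard : (Finset.univ.erase i).card = 3 := by
        rw [Finset.card_erase_of_mem (Finset.mem_univ i)]
        simp
      rw [hcard] at h2
      simpa using h2
    linarith
  by_cases hg : ∀ i, 0 ≤ α i
  · exact st7_case_good Λ hΛ a j₀ θ α C₀ hC₀nn hrwt' (fun s => (hθ s).1) hθ1 hαpt hlb hcommon
      (hgoodcase hg)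
  · push_neg at hg
    obtain ⟨i, hi⟩ := hg
    have hij := hbadcase i hi
    subst hij
    exact st7_case_bad Λ a i θ α C₀ hC₀nn hrwt' (fun s => (hθ s).1) hθ1 hαpt hlb hcommon hi

end
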